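/- Let H be a graph with vertex set {1, …, k}, let G_1, …, G_k be pairwise disjoint graphs where G_i has n_i ≥ 1 vertices and is r_i-regular, and let G̃ = ⋁_H{G_1, …, G_k} be their H-join. Fix real numbers α ≠ 0, β, γ, η and set ρ_i = Σ_{j : ij ∈ E(H)} n_j. Define the k×k real symmetric matrix K by K_{ii} = α r_i + β(r_i + ρ_i) + γ + η n_i and, for i ≠ j, K_{ij} = θ_{ij}·√(n_i n_j), where θ_{ij} = α + η if ij ∈ E(H) and θ_{ij} = η otherwise. If ν ∈ ℝ^k satisfies K·ν = λ·ν, then the vector X on the vertices of G̃ whose value at every vertex of G_i is ν_i/√(n_i) satisfies U(G̃)·X = λ·X; in particular every eigenvalue of K is an eigenvalue of the universal adjacency matrix U(G̃). -/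

import Mathlib

open Matrix

/-- The `H`-join of the family of graphs `G i`: vertices of `G i` and `G j` (for `i ≠ j`)
are all joined iff `i` and `j` are adjacent in `H`; inside each part the edges are those
of `G i`. -/
def HJoin {k : ℕ} (H : SimpleGraph (Fin k)) {V : Fin k → Type*}
    (G : ∀ i, SimpleGraph (V i)) : SimpleGraph (Σ i, V i) where
  Adj u v := (∃ h : u.1 = v.1, (G v.1).Adj (h ▸ u.2) v.2) ∨ (u.1 ≠ v.1 ∧ H.Adj u.1 v.1)
  symm := by
    constructor
    rintro ⟨i, x⟩ ⟨j, y⟩ (⟨h, hadj⟩ | ⟨hne, hH⟩)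
    · dsimp at h
      subst h
      exact Or.inl ⟨rfl, hadj.symm⟩
    · exact Or.inr ⟨Ne.symm hne, hH.symm⟩
  loopless := by
    constructor
    rintro ⟨i, x⟩ (⟨h, hadj⟩ | ⟨hne, _⟩)
    · exact (G i).loopless.irrefl _ hadj
    · exact hne rfl

/-- The universal adjacency matrix `U(G) = α A + β D + γ I + η J` of a finite graph. -/
noncomputable def univAdj {V : Type*} [Fintype V] (G : SimpleGraph V)
    (α β γ η : ℝ) : Matrix V V ℝ :=
  letI := Classical.decEq V
  letI : DecidableRel G.Adj := Classical.decRel _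
  α • G.adjMatrix ℝ + β • Matrix.diagonal (fun v => (G.degree v : ℝ))
    + γ • (1 : Matrix V V ℝ) + η • Matrix.of (fun _ _ => (1 : ℝ))

lemma hjoin_adj_same {k : ℕ} {H : SimpleGraph (Fin k)} {V : Fin k → Type*}
    {G : ∀ i, SimpleGraph (V i)} (i : Fin k) (x y : V i) :
    (HJoin H G).Adj ⟨i, x⟩ ⟨i, y⟩ ↔ (G i).Adj x y := by
  constructor
  · rintro (⟨h, hadj⟩ | ⟨hne, _⟩)
    · exact hadj
    · exact absurd rfl hne
  · exact fun h => Or.inl ⟨rfl, h⟩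

lemma hjoin_adj_ne {k : ℕ} {H : SimpleGraph (Fin k)} {V : Fin k → Type*}
    {G : ∀ i, SimpleGraph (V i)} {i j : Fin k} (hij : i ≠ j) (x : V i) (y : V j) :
    (HJoin H G).Adj ⟨i, x⟩ ⟨j, y⟩ ↔ H.Adj i j := by
  constructor
  · rintro (⟨h, _⟩ | ⟨_, hH⟩)
    · exact absurd h hij
    · exact hH
  · exact fun h => Or.inr ⟨hij, h⟩

/-- Key neighbor-sum splitting lemma for the H-join. -/
lemma hjoin_sum_neighbors {k : ℕ} (H : SimpleGraph (Fin k)) [DecidableRel H.Adj]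
    {V : Fin k → Type*} [∀ i, Fintype (V i)]
    (G : ∀ i, SimpleGraph (V i)) [∀ i, DecidableRel (G i).Adj]
    (i : Fin k) (x : V i) (f : ∀ j, V j → ℝ)
    [inst : DecidableRel (HJoin H G).Adj] :
    ∑ u ∈ (HJoin H G).neighborFinset ⟨i, x⟩, f u.1 u.2
      = (∑ y ∈ (G i).neighborFinset x, f i y)
        + ∑ j ∈ Finset.univ.erase i, (if H.Adj i j then ∑ y : V j, f j y else 0) := by
  classical
  rw [SimpleGraph.neighborFinset_eq_filter, Finset.sum_filter,
    ← Finset.univ_sigma_univ, Finset.sum_sigma]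
  rw [← Finset.add_sum_erase
    (f := fun j => ∑ y : V j, if (HJoin H G).Adj ⟨i, x⟩ ⟨j, y⟩ then f j y else 0)
    _ (Finset.mem_univ i)]
  congr 1
  · rw [SimpleGraph.neighborFinset_eq_filter, Finset.sum_filter]
    refine Finset.sum_congr rfl fun y _ => ?_
    simp [hjoin_adj_same]
  · refine Finset.sum_congr rfl fun j hj => ?_
    have hij : i ≠ j := fun h => (Finset.mem_erase.1 hj).1 h.symm
    by_cases hH : H.Adj i j
    · simp [hjoin_adj_ne hij, hH]
    · simp [hjoin_adj_ne hij, hH]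

/-- Degree formula in the H-join of regular graphs. -/
lemma hjoin_degree {k : ℕ} (H : SimpleGraph (Fin k)) [DecidableRel H.Adj]
    {V : Fin k → Type*} [∀ i, Fintype (V i)]
    (G : ∀ i, SimpleGraph (V i)) [∀ i, DecidableRel (G i).Adj]
    (r : Fin k → ℕ) (hreg : ∀ i, (G i).IsRegularOfDegree (r i))
    (i : Fin k) (x : V i)
    (inst : Fintype ((HJoin H G).neighborSet ⟨i, x⟩)) :
    (@SimpleGraph.degree _ (HJoin H G) ⟨i, x⟩ inst : ℝ)
      = (r i : ℝ) + ∑ l ∈ Finset.univ.filter (fun l => H.Adj i l), (Fintype.card (V l) : ℝ) := by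
  classical
  have hinst : inst = (HJoin H G).neighborSetFintype ⟨i, x⟩ := Subsingleton.elim _ _
  subst hinst
  have h := hjoin_sum_neighbors H G i x (fun _ _ => (1 : ℝ))
  simp only [Finset.sum_const, nsmul_eq_mul, mul_one] at h
  rw [SimpleGraph.degree]
  rw [h, SimpleGraph.card_neighborFinset_eq_degree, hreg i x]
  congr 1
  rw [Finset.sum_filter, ← Finset.add_sum_erase
    (f := fun j => if H.Adj i j then (Fintype.card (V j) : ℝ) else 0) _ (Finset.mem_univ i)]
  simp [SimpleGraph.irrefl]

/-- In the `H`-join of regular graphs `G i` (with `G i` being `r i`-regular on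
`n i ≥ 1` vertices), every eigenvector `ν` of the `k × k` quotient matrix `K` (with
`K i i = α r_i + β (r_i + ρ_i) + γ + η n_i` and `K i j = θ_{ij} √(n_i n_j)` for `i ≠ j`,
where `θ_{ij} = α + η` if `ij ∈ E(H)` and `θ_{ij} = η` otherwise) gives rise to the
eigenvector of `U(⋁_H {G i})` whose value on every vertex of `G i` is `ν i / √(n i)`,
with the same eigenvalue. -/
theorem hjoin_univAdj_eigen_of_quotient {k : ℕ} (H : SimpleGraph (Fin k))
    [DecidableRel H.Adj] {V : Fin k → Type*} [∀ i, Fintype (V i)]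
    (G : ∀ i, SimpleGraph (V i)) [∀ i, DecidableRel (G i).Adj]
    (r : Fin k → ℕ) (hreg : ∀ i, (G i).IsRegularOfDegree (r i))
    (hcard : ∀ i, 1 ≤ Fintype.card (V i))
    (α β γ η : ℝ) (hα : α ≠ 0)
    (K : Matrix (Fin k) (Fin k) ℝ)
    (hK : ∀ i j, K i j =
      if i = j then
        α * (r i : ℝ)
          + β * ((r i : ℝ)
            + ∑ l ∈ Finset.univ.filter (fun l => H.Adj i l), (Fintype.card (V l) : ℝ))
          + γ + η * (Fintype.card (V i) : ℝ)
      else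
        (if H.Adj i j then α + η else η)
          * Real.sqrt ((Fintype.card (V i) : ℝ) * (Fintype.card (V j) : ℝ)))
    (lam : ℝ) (ν : Fin k → ℝ) (hν : K.mulVec ν = lam • ν) :
    (univAdj (HJoin H G) α β γ η).mulVec
        (fun v => ν v.1 / Real.sqrt (Fintype.card (V v.1) : ℝ)) =
      lam • (fun v => ν v.1 / Real.sqrt (Fintype.card (V v.1) : ℝ)) := by
  classical
  set n : Fin k → ℝ := fun j => (Fintype.card (V j) : ℝ) with hn
  set s : Fin k → ℝ := fun j => Real.sqrt (n j) with hs
  have hnpos : ∀ j, 0 < n j := fun j => by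
    simp only [hn]; exact_mod_cast Nat.lt_of_lt_of_le Nat.zero_lt_one (hcard j)
  have hspos : ∀ j, 0 < s j := fun j => Real.sqrt_pos.2 (hnpos j)
  have hssq : ∀ j, s j * s j = n j := fun j => Real.mul_self_sqrt (hnpos j).le
  have hν' : ∀ i, ∑ j, K i j * ν j = lam * ν i := fun i => by
    have := congrFun hν i
    simpa [Matrix.mulVec, dotProduct] using this
  funext v
  obtain ⟨i, x⟩ := v
  -- expand the universal adjacency matrix
  show (univAdj (HJoin H G) α β γ η *ᵥ fun v => ν v.1 / s v.1) ⟨i, x⟩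
      = lam * (ν i / s i)
  rw [univAdj]
  rw [add_mulVec, add_mulVec, add_mulVec, smul_mulVec, smul_mulVec,
    smul_mulVec, smul_mulVec]
  simp only [Pi.add_apply, Pi.smul_apply, smul_eq_mul, one_mulVec,
    mulVec_diagonal, SimpleGraph.adjMatrix_mulVec_apply]
  -- the adjacency part
  have hA : ∑ u ∈ (HJoin H G).neighborFinset ⟨i, x⟩, ν u.1 / s u.1
      = (r i : ℝ) * (ν i / s i)
        + ∑ j ∈ Finset.univ.erase i, (if H.Adj i j then n j * (ν j / s j) else 0) := by
    rw [hjoin_sum_neighbors H G i x (fun j _ => ν j / s j)]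
    congr 1
    · rw [Finset.sum_const, nsmul_eq_mul, SimpleGraph.card_neighborFinset_eq_degree,
        hreg i x]
    · refine Finset.sum_congr rfl fun j _ => ?_
      split
      · rw [Finset.sum_const, nsmul_eq_mul]
        rfl
      · rfl
  rw [hA]
  -- the degree part
  rw [hjoin_degree H G r hreg i x]
  -- the all-ones part
  have hJ : ((Matrix.of fun (_ _ : Σ j, V j) => (1 : ℝ)) *ᵥ fun v => ν v.1 / s v.1) ⟨i, x⟩
      = n i * (ν i / s i) + ∑ j ∈ Finset.univ.erase i, n j * (ν j / s j) := by
    simp only [Matrix.mulVec, dotProduct, Matrix.of_apply, one_mul]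
    rw [← Finset.univ_sigma_univ, Finset.sum_sigma]
    rw [← Finset.add_sum_erase (f := fun j => ∑ _y : V j, ν j / s j) _ (Finset.mem_univ i)]
    simp [Finset.sum_const, nsmul_eq_mul, mul_comm]
    rfl
  rw [hJ]
  -- the quotient matrix side
  rw [show lam * (ν i / s i) = (∑ j, K i j * ν j) / s i by rw [hν' i, mul_div_assoc]]
  rw [← Finset.add_sum_erase (f := fun j => K i j * ν j) _ (Finset.mem_univ i)]
  have hKii : K i i * ν i / s i
      = α * ((r i : ℝ) * (ν i / s i))
        + β * (((r i : ℝ) + ∑ l ∈ Finset.univ.filter (fun l => H.Adj i l), n l) * (ν i / s i))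
        + γ * (ν i / s i) + η * (n i * (ν i / s i)) := by
    rw [hK i i, if_pos rfl]
    ring
  have hKij : ∀ j ∈ Finset.univ.erase i, K i j * ν j / s i
      = α * (if H.Adj i j then n j * (ν j / s j) else 0)
        + η * (n j * (ν j / s j)) := by
    intro j hj
    have hij : i ≠ j := fun h => (Finset.mem_erase.1 hj).1 h.symm
    have hsi : s i ≠ 0 := (hspos i).ne'
    have hsj : s j ≠ 0 := (hspos j).ne'
    have hnj : n j * (ν j / s j) = s j * ν j := by
      rw [← hssq j]
      field_simp
    rw [hK i j, if_neg hij]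
    rw [show Real.sqrt ((Fintype.card (V i) : ℝ) * (Fintype.card (V j) : ℝ)) = s i * s j
      from Real.sqrt_mul (hnpos i).le _]
    split
    · rw [hnj]
      field_simp
    · simp only [mul_zero, zero_add]
      rw [hnj]
      field_simp
  rw [show (K i i * ν i + ∑ j ∈ Finset.univ.erase i, K i j * ν j) / s i
      = K i i * ν i / s i + ∑ j ∈ Finset.univ.erase i, K i j * ν j / s i by
    rw [add_div, Finset.sum_div]]
  rw [Finset.sum_congr rfl hKij, Finset.sum_add_distrib, ← Finset.mul_sum, ← Finset.mul_sum,
    hKii]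
  ring
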